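/- (Conformal transformation of the scalar curvature in dimension 4.) Let g be a smooth metric on an open set U ⊆ ℝ⁴ and let Ω : U → ℝ be smooth and everywhere positive; set g'_{αβ} = Ω² g_{αβ}. Then the scalar curvatures of g' and g satisfy, at every point of U, R' = Ω⁻² ( R − 6 g^{μν} ∂_μ(ln Ω) ∂_ν(ln Ω) − 6 ∇²(ln Ω) ), where ∇²(ln Ω) = g^{μν}( ∂_μ∂_ν (ln Ω) − Λ^ρ_{μν} ∂_ρ(ln Ω) ) is the Laplacian with respect to the Levi-Civita connection Λ of g. -/

import Mathlib

open Matrix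

/-- The partial derivative of `f : ℝ⁴ → ℝ` in the `μ`-th coordinate direction. -/
noncomputable def pd (μ : Fin 4) (f : (Fin 4 → ℝ) → ℝ) (x : Fin 4 → ℝ) : ℝ :=
  fderiv ℝ f x (Pi.single μ 1)


/-- The Levi-Civita connection `Λ^η_{αβ}` of a metric `g`. -/
noncomputable def levi (g : (Fin 4 → ℝ) → Matrix (Fin 4) (Fin 4) ℝ)
    (x : Fin 4 → ℝ) (η α β : Fin 4) : ℝ :=
  (1 / 2) * ∑ μ, (g x)⁻¹ η μ *
    (pd β (fun y => g y α μ) x + pd α (fun y => g y μ β) x - pd μ (fun y => g y α β) x)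

/-- The Riemann curvature tensor `R^a{}_{jki}` of the Levi-Civita connection of `g`. -/
noncomputable def riem (g : (Fin 4 → ℝ) → Matrix (Fin 4) (Fin 4) ℝ)
    (x : Fin 4 → ℝ) (a j k i : Fin 4) : ℝ :=
  pd k (fun y => levi g y a j i) x - pd i (fun y => levi g y a j k) x
    + ∑ r, (levi g x a r k * levi g x r j i - levi g x a r i * levi g x r j k)

/-- The Ricci tensor `R_{ji} = R^a{}_{jai}` of `g`. -/
noncomputable def ricci (g : (Fin 4 → ℝ) → Matrix (Fin 4) (Fin 4) ℝ)
    (x : Fin 4 → ℝ) (j i : Fin 4) : ℝ :=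
  ∑ a, riem g x a j a i

/-- The scalar curvature `R = g^{ji} R_{ji}` of `g`. -/
noncomputable def scal (g : (Fin 4 → ℝ) → Matrix (Fin 4) (Fin 4) ℝ)
    (x : Fin 4 → ℝ) : ℝ :=
  ∑ j, ∑ i, (g x)⁻¹ j i * ricci g x j i

namespace CfAux
variable {U : Set (Fin 4 → ℝ)} {x : Fin 4 → ℝ} {f h : (Fin 4 → ℝ) → ℝ} {μ : Fin 4}

def Sm (U : Set (Fin 4 → ℝ)) (f : (Fin 4 → ℝ) → ℝ) : Prop := ContDiffOn ℝ (⊤ : ℕ∞) f U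

theorem Sm.const (c : ℝ) : Sm U (fun _ => c) := contDiffOn_const
theorem Sm.add {f h : (Fin 4 → ℝ) → ℝ} (hf : Sm U f) (hh : Sm U h) :
    Sm U (fun y => f y + h y) := ContDiffOn.add hf hh
theorem Sm.mul {f h : (Fin 4 → ℝ) → ℝ} (hf : Sm U f) (hh : Sm U h) :
    Sm U (fun y => f y * h y) := ContDiffOn.mul hf hh
theorem Sm.sub {f h : (Fin 4 → ℝ) → ℝ} (hf : Sm U f) (hh : Sm U h) :
    Sm U (fun y => f y - h y) := ContDiffOn.sub hf hh
theorem Sm.neg {f : (Fin 4 → ℝ) → ℝ} (hf : Sm U f) : Sm U (fun y => - f y) := ContDiffOn.neg hf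
theorem Sm.inv {f : (Fin 4 → ℝ) → ℝ} (hf : Sm U f) (h0 : ∀ x ∈ U, f x ≠ 0) :
    Sm U (fun y => (f y)⁻¹) := ContDiffOn.inv hf h0
theorem Sm.sum {ι : Type*} {s : Finset ι} {f : ι → (Fin 4 → ℝ) → ℝ}
    (hf : ∀ i ∈ s, Sm U (f i)) : Sm U (fun y => ∑ i ∈ s, f i y) :=
  ContDiffOn.sum hf
theorem Sm.prod {ι : Type*} {s : Finset ι} {f : ι → (Fin 4 → ℝ) → ℝ}
    (hf : ∀ i ∈ s, Sm U (f i)) : Sm U (fun y => ∏ i ∈ s, f i y) := by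
  classical
  induction s using Finset.induction with
  | empty => simpa using Sm.const (U := U) 1
  | insert _ _ hni ih =>
    rename_i a s
    simp only [Finset.prod_insert hni]
    exact ContDiffOn.mul (hf a (Finset.mem_insert_self a s))
      (ih (fun i hi => hf i (Finset.mem_insert_of_mem hi)))
theorem Sm.zsmul {f : (Fin 4 → ℝ) → ℝ} (hf : Sm U f) (c : ℤˣ) :
    Sm U (fun y => (c : ℤ) • f y) := by
  simp only [zsmul_eq_mul]
  exact ContDiffOn.mul (Sm.const ((c : ℤ) : ℝ)) hf

theorem Sm.pd {f : (Fin 4 → ℝ) → ℝ} (hU : IsOpen U) (hf : Sm U f) (μ : Fin 4) :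
    Sm U (pd μ f) := by
  have h1 : ContDiffOn ℝ (⊤ : ℕ∞) (fderiv ℝ f) U := hf.fderiv_of_isOpen hU (by simp)
  exact h1.clm_apply contDiffOn_const

theorem Sm.dAt {f : (Fin 4 → ℝ) → ℝ} (hU : IsOpen U) (hf : Sm U f) {x : Fin 4 → ℝ}
    (hx : x ∈ U) : DifferentiableAt ℝ f x :=
  (hf.contDiffAt (hU.mem_nhds hx)).differentiableAt (by simp)

theorem Sm.log {f : (Fin 4 → ℝ) → ℝ} (hf : Sm U f) (h0 : ∀ x ∈ U, f x ≠ 0) :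
    Sm U (fun y => Real.log (f y)) := ContDiffOn.log hf h0


theorem pd_congr (hU : IsOpen U) (hx : x ∈ U) (hfh : ∀ y ∈ U, f y = h y) :
    pd μ f x = pd μ h x := by
  unfold pd
  rw [Filter.EventuallyEq.fderiv_eq (Filter.eventuallyEq_of_mem (hU.mem_nhds hx) hfh)]

theorem pd_add (hf : DifferentiableAt ℝ f x) (hh : DifferentiableAt ℝ h x) :
    pd μ (fun y => f y + h y) x = pd μ f x + pd μ h x := by
  unfold pd; rw [fderiv_fun_add hf hh]; rfl

theorem pd_sub (hf : DifferentiableAt ℝ f x) (hh : DifferentiableAt ℝ h x) :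
    pd μ (fun y => f y - h y) x = pd μ f x - pd μ h x := by
  unfold pd; rw [fderiv_fun_sub hf hh]; rfl

theorem pd_mul (hf : DifferentiableAt ℝ f x) (hh : DifferentiableAt ℝ h x) :
    pd μ (fun y => f y * h y) x = f x * pd μ h x + h x * pd μ f x := by
  unfold pd; rw [fderiv_fun_mul hf hh]; simp

theorem pd_const (c : ℝ) : pd μ (fun _ => c) x = 0 := by
  unfold pd; rw [fderiv_fun_const]; simp

theorem pd_const_mul (c : ℝ) (hf : DifferentiableAt ℝ f x) :
    pd μ (fun y => c * f y) x = c * pd μ f x := by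
  rw [pd_mul (differentiableAt_const c) hf, pd_const]; ring

theorem pd_sum {ι : Type*} {s : Finset ι} {F : ι → (Fin 4 → ℝ) → ℝ}
    (hF : ∀ i ∈ s, DifferentiableAt ℝ (F i) x) :
    pd μ (fun y => ∑ i ∈ s, F i y) x = ∑ i ∈ s, pd μ (F i) x := by
  unfold pd; rw [fderiv_fun_sum hF]; simp

theorem pd_log (hf : DifferentiableAt ℝ f x) (h0 : f x ≠ 0) :
    pd μ (fun y => Real.log (f y)) x = (f x)⁻¹ * pd μ f x := by
  unfold pd
  have h := (Real.hasDerivAt_log h0).comp_hasFDerivAt x hf.hasFDerivAt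
  have : (fun y => Real.log (f y)) = Real.log ∘ f := rfl
  rw [this, h.fderiv]; simp [mul_comm]

theorem Sm.det {g : (Fin 4 → ℝ) → Matrix (Fin 4) (Fin 4) ℝ}
    (hg : ∀ a b, Sm U (fun y => g y a b)) : Sm U (fun y => (g y).det) := by
  have he : ∀ y, (g y).det
      = ∑ σ : Equiv.Perm (Fin 4), ((Equiv.Perm.sign σ : ℤ) : ℝ) * ∏ i, g y (σ i) i := by
    intro y; rw [Matrix.det_apply]
    congr 1; funext σ; rw [Units.smul_def, zsmul_eq_mul]
  simp only [he]
  refine Sm.sum (fun σ _ => ContDiffOn.mul (Sm.const _) (Sm.prod (fun i _ => hg (σ i) i)))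

theorem Sm.inv_entry {g : (Fin 4 → ℝ) → Matrix (Fin 4) (Fin 4) ℝ}
    (hg : ∀ a b, Sm U (fun y => g y a b)) (hdet : ∀ x ∈ U, IsUnit (g x).det)
    (a b : Fin 4) : Sm U (fun y => (g y)⁻¹ a b) := by
  have h0 : ∀ x ∈ U, (g x).det ≠ 0 := fun x hx => isUnit_iff_ne_zero.mp (hdet x hx)
  have hadj : Sm U (fun y => (g y).adjugate a b) := by
    simp only [Matrix.adjugate_apply]
    refine Sm.det (fun c d => ?_)
    by_cases hcb : c = b
    · simp only [Matrix.updateRow_apply, hcb, if_true]; exact Sm.const _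
    · simp only [Matrix.updateRow_apply, hcb, if_false]; exact hg c d
  have he : ∀ y, (g y)⁻¹ a b = ((g y).det)⁻¹ * (g y).adjugate a b := by
    intro y; rw [Matrix.inv_def, Ring.inverse_eq_inv]; simp [Matrix.smul_apply]
  simp only [he]
  exact ContDiffOn.mul (Sm.inv (Sm.det hg) h0) hadj


/-! ### Definitions at a point -/

noncomputable def Pv (Ω : (Fin 4 → ℝ) → ℝ) (y : Fin 4 → ℝ) (μ : Fin 4) : ℝ :=
  pd μ (fun z => Real.log (Ω z)) y

noncomputable def Tv (g : (Fin 4 → ℝ) → Matrix (Fin 4) (Fin 4) ℝ) (Ω : (Fin 4 → ℝ) → ℝ)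
    (y : Fin 4 → ℝ) (a : Fin 4) : ℝ :=
  ∑ μ, (g y)⁻¹ a μ * Pv Ω y μ

noncomputable def Cc (g : (Fin 4 → ℝ) → Matrix (Fin 4) (Fin 4) ℝ) (Ω : (Fin 4 → ℝ) → ℝ)
    (y : Fin 4 → ℝ) (a α β : Fin 4) : ℝ :=
  (if a = α then Pv Ω y β else 0) + (if a = β then Pv Ω y α else 0)
    - g y α β * Tv g Ω y a

section Main

variable {U : Set (Fin 4 → ℝ)} {g : (Fin 4 → ℝ) → Matrix (Fin 4) (Fin 4) ℝ}
  {Ω : (Fin 4 → ℝ) → ℝ} {x : Fin 4 → ℝ}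

theorem sm_inv (hg : ∀ μ ν : Fin 4, ContDiffOn ℝ (⊤ : ℕ∞) (fun x => g x μ ν) U)
    (hginv : ∀ x ∈ U, IsUnit (g x).det) (a b : Fin 4) :
    Sm U (fun y => (g y)⁻¹ a b) :=
  Sm.inv_entry hg hginv a b

theorem sm_psi (hΩ : ContDiffOn ℝ (⊤ : ℕ∞) Ω U) (hΩpos : ∀ x ∈ U, 0 < Ω x) :
    Sm U (fun y => Real.log (Ω y)) :=
  Sm.log hΩ (fun x hx => ne_of_gt (hΩpos x hx))

theorem sm_P (hU : IsOpen U) (hΩ : ContDiffOn ℝ (⊤ : ℕ∞) Ω U)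
    (hΩpos : ∀ x ∈ U, 0 < Ω x) (μ : Fin 4) : Sm U (fun y => Pv Ω y μ) :=
  Sm.pd hU (sm_psi hΩ hΩpos) μ

theorem sm_T (hU : IsOpen U) (hg : ∀ μ ν : Fin 4, ContDiffOn ℝ (⊤ : ℕ∞) (fun x => g x μ ν) U)
    (hginv : ∀ x ∈ U, IsUnit (g x).det) (hΩ : ContDiffOn ℝ (⊤ : ℕ∞) Ω U)
    (hΩpos : ∀ x ∈ U, 0 < Ω x) (a : Fin 4) : Sm U (fun y => Tv g Ω y a) :=
  Sm.sum fun μ _ => ContDiffOn.mul (sm_inv hg hginv a μ) (sm_P hU hΩ hΩpos μ)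

theorem sm_C (hU : IsOpen U) (hg : ∀ μ ν : Fin 4, ContDiffOn ℝ (⊤ : ℕ∞) (fun x => g x μ ν) U)
    (hginv : ∀ x ∈ U, IsUnit (g x).det) (hΩ : ContDiffOn ℝ (⊤ : ℕ∞) Ω U)
    (hΩpos : ∀ x ∈ U, 0 < Ω x) (a α β : Fin 4) : Sm U (fun y => Cc g Ω y a α β) := by
  unfold Cc
  refine ContDiffOn.sub (ContDiffOn.add ?_ ?_) (ContDiffOn.mul (hg α β) (sm_T hU hg hginv hΩ hΩpos a)) <;>
  · split
    · exact sm_P hU hΩ hΩpos _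
    · exact Sm.const 0

theorem sm_levi (hU : IsOpen U) (hg : ∀ μ ν : Fin 4, ContDiffOn ℝ (⊤ : ℕ∞) (fun x => g x μ ν) U)
    (hginv : ∀ x ∈ U, IsUnit (g x).det) (a α β : Fin 4) :
    Sm U (fun y => levi g y a α β) := by
  unfold levi
  refine ContDiffOn.mul (Sm.const _) (Sm.sum fun μ _ => ContDiffOn.mul (sm_inv hg hginv a μ) ?_)
  exact ContDiffOn.sub (ContDiffOn.add (Sm.pd hU (hg α μ) β) (Sm.pd hU (hg μ β) α))
    (Sm.pd hU (hg α β) μ)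

/-- contraction `g⁻¹ g = 1` entrywise -/
theorem contr₁ (hginv : ∀ x ∈ U, IsUnit (g x).det) (hx : x ∈ U) (a c : Fin 4) :
    ∑ b, (g x)⁻¹ a b * g x b c = if a = c then 1 else 0 := by
  have h := Matrix.nonsing_inv_mul (g x) (hginv x hx)
  have := congrFun (congrFun h a) c
  rw [Matrix.mul_apply] at this
  rw [this, Matrix.one_apply]

/-- contraction `g g⁻¹ = 1` entrywise -/
theorem contr₂ (hginv : ∀ x ∈ U, IsUnit (g x).det) (hx : x ∈ U) (a c : Fin 4) :
    ∑ b, g x a b * (g x)⁻¹ b c = if a = c then 1 else 0 := by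
  have h := Matrix.mul_nonsing_inv (g x) (hginv x hx)
  have := congrFun (congrFun h a) c
  rw [Matrix.mul_apply] at this
  rw [this, Matrix.one_apply]

theorem gsym (hgsym : ∀ x ∈ U, (g x)ᵀ = g x) (hx : x ∈ U) (a b : Fin 4) :
    g x a b = g x b a := by
  conv_lhs => rw [← hgsym x hx]
  rfl

theorem gisym (hgsym : ∀ x ∈ U, (g x)ᵀ = g x) (hx : x ∈ U) (a b : Fin 4) :
    (g x)⁻¹ a b = (g x)⁻¹ b a := by
  have h : ((g x)⁻¹)ᵀ = (g x)⁻¹ := by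
    rw [Matrix.transpose_nonsing_inv, hgsym x hx]
  conv_lhs => rw [← h]
  rfl

/-- the inverse of the conformal metric -/
theorem gp_inv (hginv : ∀ x ∈ U, IsUnit (g x).det) (hΩpos : ∀ x ∈ U, 0 < Ω x)
    (hx : x ∈ U) : (Ω x ^ 2 • g x)⁻¹ = (Ω x ^ 2)⁻¹ • (g x)⁻¹ := by
  have h2 : Ω x ^ 2 ≠ 0 := pow_ne_zero _ (ne_of_gt (hΩpos x hx))
  apply Matrix.inv_eq_right_inv
  rw [Matrix.smul_mul, Matrix.mul_smul, smul_smul, Matrix.mul_nonsing_inv _ (hginv x hx),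
    mul_inv_cancel₀ h2, one_smul]

/-- `pd` of an entry of the conformal metric -/
theorem pd_gp (hU : IsOpen U) (hg : ∀ μ ν : Fin 4, ContDiffOn ℝ (⊤ : ℕ∞) (fun x => g x μ ν) U)
    (hΩ : ContDiffOn ℝ (⊤ : ℕ∞) Ω U) (hΩpos : ∀ x ∈ U, 0 < Ω x) (hx : x ∈ U)
    (β α μ : Fin 4) :
    pd β (fun y => (Ω y ^ 2 • g y) α μ) x
      = Ω x ^ 2 * (pd β (fun y => g y α μ) x + 2 * Pv Ω x β * g x α μ) := by
  have hΩd : DifferentiableAt ℝ Ω x := Sm.dAt hU hΩ hx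
  have hgd : DifferentiableAt ℝ (fun y => g y α μ) x := Sm.dAt hU (hg α μ) hx
  have hΩ2 : DifferentiableAt ℝ (fun y => Ω y ^ 2) x := by
    simp only [pow_two]; exact hΩd.mul hΩd
  have h1 : (fun y => (Ω y ^ 2 • g y) α μ) = fun y => (Ω y ^ 2) * g y α μ := by
    funext y; simp [Matrix.smul_apply]
  rw [h1, pd_mul hΩ2 hgd]
  have h2 : pd β (fun y => Ω y ^ 2) x = 2 * Ω x * pd β Ω x := by
    have : (fun y => Ω y ^ 2) = fun y => Ω y * Ω y := by funext y; ring
    rw [this, pd_mul hΩd hΩd]; ring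
  have h3 : Pv Ω x β = (Ω x)⁻¹ * pd β Ω x := pd_log hΩd (ne_of_gt (hΩpos x hx))
  rw [h2, h3]
  have : Ω x ≠ 0 := ne_of_gt (hΩpos x hx)
  field_simp


theorem pd_ite {μ : Fin 4} (c : Prop) [Decidable c] (f : (Fin 4 → ℝ) → ℝ) :
    pd μ (fun y => if c then f y else 0) x = if c then pd μ f x else 0 := by
  split
  · rfl
  · exact pd_const 0

theorem dAt_ite (c : Prop) [Decidable c] {f : (Fin 4 → ℝ) → ℝ}
    (hf : DifferentiableAt ℝ f x) :
    DifferentiableAt ℝ (fun y => if c then f y else 0) x := by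
  split
  · exact hf
  · exact differentiableAt_const 0

theorem dgsym (hU : IsOpen U) (hgsym : ∀ x ∈ U, (g x)ᵀ = g x) (hx : x ∈ U) (k a b : Fin 4) :
    pd k (fun y => g y a b) x = pd k (fun y => g y b a) x :=
  pd_congr hU hx (fun y hy => gsym hgsym hy a b)

theorem levi_lower_symm (hU : IsOpen U) (hgsym : ∀ x ∈ U, (g x)ᵀ = g x) (hx : x ∈ U)
    (a α β : Fin 4) : levi g x a α β = levi g x a β α := by
  unfold levi
  congr 1
  refine Finset.sum_congr rfl fun μ _ => ?_
  rw [dgsym hU hgsym hx β α μ, dgsym hU hgsym hx α μ β, dgsym hU hgsym hx μ α β]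
  ring

/-- derivative of the inverse metric -/
theorem pd_inv (hU : IsOpen U) (hg : ∀ μ ν : Fin 4, ContDiffOn ℝ (⊤ : ℕ∞) (fun x => g x μ ν) U)
    (hginv : ∀ x ∈ U, IsUnit (g x).det) (hx : x ∈ U) (k a b : Fin 4) :
    pd k (fun y => (g y)⁻¹ a b) x
      = -∑ c, ∑ d, (g x)⁻¹ a d * pd k (fun y => g y d c) x * (g x)⁻¹ c b := by
  have hdinv : ∀ a d : Fin 4, DifferentiableAt ℝ (fun y => (g y)⁻¹ a d) x :=
    fun a d => Sm.dAt hU (sm_inv hg hginv a d) hx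
  have hdg : ∀ d c : Fin 4, DifferentiableAt ℝ (fun y => g y d c) x :=
    fun d c => Sm.dAt hU (hg d c) hx
  have hzero : ∀ c, pd k (fun y => ∑ d, (g y)⁻¹ a d * g y d c) x = 0 := by
    intro c
    rw [pd_congr hU hx (fun y hy => contr₁ hginv hy a c)]
    exact pd_const _
  have hexp : ∀ c, pd k (fun y => ∑ d, (g y)⁻¹ a d * g y d c) x
      = (∑ d, (g x)⁻¹ a d * pd k (fun y => g y d c) x)
        + ∑ d, g x d c * pd k (fun y => (g y)⁻¹ a d) x := by
    intro c
    rw [pd_sum (fun d _ => (hdinv a d).fun_mul (hdg d c))]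
    rw [← Finset.sum_add_distrib]
    refine Finset.sum_congr rfl fun d _ => ?_
    rw [pd_mul (hdinv a d) (hdg d c)]
  have hkey : ∀ c, ∑ d, g x d c * pd k (fun y => (g y)⁻¹ a d) x
      = -∑ d, (g x)⁻¹ a d * pd k (fun y => g y d c) x := by
    intro c
    have h := (hexp c).symm.trans (hzero c)
    linarith [h]
  calc pd k (fun y => (g y)⁻¹ a b) x
      = ∑ d, (if d = b then (1:ℝ) else 0) * pd k (fun y => (g y)⁻¹ a d) x := by
        have h4 : ∑ d, (if d = b then (1:ℝ) else 0) * pd k (fun y => (g y)⁻¹ a d) x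
            = pd k (fun y => (g y)⁻¹ a b) x := by simp
        rw [h4]
    _ = ∑ d, (∑ c, g x d c * (g x)⁻¹ c b) * pd k (fun y => (g y)⁻¹ a d) x := by
        refine Finset.sum_congr rfl fun d _ => ?_
        rw [contr₂ hginv hx d b]
    _ = ∑ c, (∑ d, g x d c * pd k (fun y => (g y)⁻¹ a d) x) * (g x)⁻¹ c b := by
        simp only [Finset.sum_mul]
        rw [Finset.sum_comm]
        refine Finset.sum_congr rfl fun c _ => Finset.sum_congr rfl fun d _ => by ring
    _ = ∑ c, (-∑ d, (g x)⁻¹ a d * pd k (fun y => g y d c) x) * (g x)⁻¹ c b := by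
        refine Finset.sum_congr rfl fun c _ => ?_
        rw [hkey c]
    _ = -∑ c, ∑ d, (g x)⁻¹ a d * pd k (fun y => g y d c) x * (g x)⁻¹ c b := by
        rw [← Finset.sum_neg_distrib]
        refine Finset.sum_congr rfl fun c _ => ?_
        rw [neg_mul, Finset.sum_mul]

/-- conformal transformation of the Christoffel symbols -/
theorem levi_conf (hU : IsOpen U)
    (hg : ∀ μ ν : Fin 4, ContDiffOn ℝ (⊤ : ℕ∞) (fun x => g x μ ν) U)
    (hgsym : ∀ x ∈ U, (g x)ᵀ = g x) (hginv : ∀ x ∈ U, IsUnit (g x).det)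
    (hΩ : ContDiffOn ℝ (⊤ : ℕ∞) Ω U) (hΩpos : ∀ x ∈ U, 0 < Ω x) (hx : x ∈ U)
    (a α β : Fin 4) :
    levi (fun y => Ω y ^ 2 • g y) x a α β = levi g x a α β + Cc g Ω x a α β := by
  have hΩ2 : (Ω x ^ 2) ≠ 0 := pow_ne_zero _ (ne_of_gt (hΩpos x hx))
  have key : ∑ μ, ((Ω x ^ 2 • g x)⁻¹ a μ *
      (pd β (fun y => (Ω y ^ 2 • g y) α μ) x + pd α (fun y => (Ω y ^ 2 • g y) μ β) x
        - pd μ (fun y => (Ω y ^ 2 • g y) α β) x))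
      = (∑ μ, (g x)⁻¹ a μ *
          (pd β (fun y => g y α μ) x + pd α (fun y => g y μ β) x - pd μ (fun y => g y α β) x))
        + ((∑ μ, (g x)⁻¹ a μ * g x μ α) * (2 * Pv Ω x β)
        + (∑ μ, (g x)⁻¹ a μ * g x μ β) * (2 * Pv Ω x α)
        - (∑ μ, (g x)⁻¹ a μ * Pv Ω x μ) * (2 * g x α β)) := by
    have hsummand : ∀ μ : Fin 4, (Ω x ^ 2 • g x)⁻¹ a μ *
        (pd β (fun y => (Ω y ^ 2 • g y) α μ) x + pd α (fun y => (Ω y ^ 2 • g y) μ β) x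
          - pd μ (fun y => (Ω y ^ 2 • g y) α β) x)
        = (g x)⁻¹ a μ *
            (pd β (fun y => g y α μ) x + pd α (fun y => g y μ β) x - pd μ (fun y => g y α β) x)
          + (((g x)⁻¹ a μ * g x μ α) * (2 * Pv Ω x β)
          + ((g x)⁻¹ a μ * g x μ β) * (2 * Pv Ω x α)
          - ((g x)⁻¹ a μ * Pv Ω x μ) * (2 * g x α β)) := by
      intro μ
      rw [gp_inv hginv hΩpos hx, pd_gp hU hg hΩ hΩpos hx β α μ, pd_gp hU hg hΩ hΩpos hx α μ β,
        pd_gp hU hg hΩ hΩpos hx μ α β, gsym hgsym hx α μ]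
      simp only [Matrix.smul_apply, smul_eq_mul]
      have hΩ0 : Ω x ≠ 0 := ne_of_gt (hΩpos x hx)
      field_simp
      ring
    rw [Finset.sum_congr rfl (fun μ _ => hsummand μ), Finset.sum_add_distrib,
      Finset.sum_sub_distrib, Finset.sum_add_distrib, ← Finset.sum_mul, ← Finset.sum_mul,
      ← Finset.sum_mul]
  have hc1 : ∑ μ, (g x)⁻¹ a μ * g x μ α = if a = α then 1 else 0 := contr₁ hginv hx a α
  have hc2 : ∑ μ, (g x)⁻¹ a μ * g x μ β = if a = β then 1 else 0 := contr₁ hginv hx a β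
  show (1/2 : ℝ) * ∑ μ, _ = _
  rw [key, hc1, hc2]
  unfold levi Cc Tv
  split <;> split <;> ring

theorem pd_T (hU : IsOpen U) (hg : ∀ μ ν : Fin 4, ContDiffOn ℝ (⊤ : ℕ∞) (fun x => g x μ ν) U)
    (hginv : ∀ x ∈ U, IsUnit (g x).det) (hΩ : ContDiffOn ℝ (⊤ : ℕ∞) Ω U)
    (hΩpos : ∀ x ∈ U, 0 < Ω x) (hx : x ∈ U) (k a : Fin 4) :
    pd k (fun y => Tv g Ω y a) x
      = ∑ μ, (pd k (fun y => (g y)⁻¹ a μ) x * Pv Ω x μ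
          + (g x)⁻¹ a μ * pd k (fun y => Pv Ω y μ) x) := by
  unfold Tv
  rw [pd_sum (fun μ _ => (Sm.dAt hU (sm_inv hg hginv a μ) hx).fun_mul
    (Sm.dAt hU (sm_P hU hΩ hΩpos μ) hx))]
  refine Finset.sum_congr rfl fun μ _ => ?_
  rw [pd_mul (Sm.dAt hU (sm_inv hg hginv a μ) hx) (Sm.dAt hU (sm_P hU hΩ hΩpos μ) hx)]
  ring

theorem pd_C (hU : IsOpen U) (hg : ∀ μ ν : Fin 4, ContDiffOn ℝ (⊤ : ℕ∞) (fun x => g x μ ν) U)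
    (hginv : ∀ x ∈ U, IsUnit (g x).det) (hΩ : ContDiffOn ℝ (⊤ : ℕ∞) Ω U)
    (hΩpos : ∀ x ∈ U, 0 < Ω x) (hx : x ∈ U) (k a α β : Fin 4) :
    pd k (fun y => Cc g Ω y a α β) x
      = (if a = α then pd k (fun y => Pv Ω y β) x else 0)
        + (if a = β then pd k (fun y => Pv Ω y α) x else 0)
        - (pd k (fun y => g y α β) x * Tv g Ω x a
            + g x α β * pd k (fun y => Tv g Ω y a) x) := by
  unfold Cc
  rw [pd_sub (DifferentiableAt.fun_add (dAt_ite _ (Sm.dAt hU (sm_P hU hΩ hΩpos β) hx))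
      (dAt_ite _ (Sm.dAt hU (sm_P hU hΩ hΩpos α) hx)))
    ((Sm.dAt hU (hg α β) hx).fun_mul (Sm.dAt hU (sm_T hU hg hginv hΩ hΩpos a) hx)),
    pd_add (dAt_ite _ (Sm.dAt hU (sm_P hU hΩ hΩpos β) hx))
      (dAt_ite _ (Sm.dAt hU (sm_P hU hΩ hΩpos α) hx)),
    pd_ite, pd_ite,
    pd_mul (Sm.dAt hU (hg α β) hx) (Sm.dAt hU (sm_T hU hg hginv hΩ hΩpos a) hx)]
  ring

theorem trace_GT (hgsym : ∀ x ∈ U, (g x)ᵀ = g x) (hginv : ∀ x ∈ U, IsUnit (g x).det)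
    (hx : x ∈ U) (j : Fin 4) :
    ∑ a, g x j a * Tv g Ω x a = Pv Ω x j := by
  unfold Tv
  rw [show ∑ a, g x j a * ∑ μ, (g x)⁻¹ a μ * Pv Ω x μ
      = ∑ μ, (∑ a, g x j a * (g x)⁻¹ a μ) * Pv Ω x μ from by
    simp only [Finset.mul_sum, Finset.sum_mul]
    rw [Finset.sum_comm]
    exact Finset.sum_congr rfl fun μ _ => Finset.sum_congr rfl fun a _ => by ring]
  simp only [contr₂ hginv hx j]
  simp

theorem trace_C (hgsym : ∀ x ∈ U, (g x)ᵀ = g x) (hginv : ∀ x ∈ U, IsUnit (g x).det)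
    (hx : x ∈ U) (j : Fin 4) :
    ∑ a, Cc g Ω x a j a = 4 * Pv Ω x j := by
  unfold Cc
  rw [Finset.sum_sub_distrib, Finset.sum_add_distrib, trace_GT hgsym hginv hx j]
  have h1 : ∑ a, (if a = j then Pv Ω x a else 0) = Pv Ω x j := by simp
  have h2 : ∑ a : Fin 4, (if a = a then Pv Ω x j else 0) = 4 * Pv Ω x j := by simp
  rw [h1, h2]
  ring

theorem sum_pdC_trace (hU : IsOpen U)
    (hg : ∀ μ ν : Fin 4, ContDiffOn ℝ (⊤ : ℕ∞) (fun x => g x μ ν) U)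
    (hgsym : ∀ x ∈ U, (g x)ᵀ = g x) (hginv : ∀ x ∈ U, IsUnit (g x).det)
    (hΩ : ContDiffOn ℝ (⊤ : ℕ∞) Ω U) (hΩpos : ∀ x ∈ U, 0 < Ω x) (hx : x ∈ U) (j i : Fin 4) :
    ∑ a, pd i (fun y => Cc g Ω y a j a) x = 4 * pd i (fun y => Pv Ω y j) x := by
  rw [← pd_sum (fun a _ => Sm.dAt hU (sm_C hU hg hginv hΩ hΩpos a j a) hx)]
  rw [pd_congr hU hx (fun y hy => trace_C hgsym hginv hy j)]
  rw [pd_const_mul 4 (Sm.dAt hU (sm_P hU hΩ hΩpos j) hx)]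

theorem riem_conf (hU : IsOpen U)
    (hg : ∀ μ ν : Fin 4, ContDiffOn ℝ (⊤ : ℕ∞) (fun x => g x μ ν) U)
    (hgsym : ∀ x ∈ U, (g x)ᵀ = g x) (hginv : ∀ x ∈ U, IsUnit (g x).det)
    (hΩ : ContDiffOn ℝ (⊤ : ℕ∞) Ω U) (hΩpos : ∀ x ∈ U, 0 < Ω x) (hx : x ∈ U)
    (a j k i : Fin 4) :
    riem (fun y => Ω y ^ 2 • g y) x a j k i
      = riem g x a j k i
        + (pd k (fun y => Cc g Ω y a j i) x - pd i (fun y => Cc g Ω y a j k) x)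
        + ∑ r, (levi g x a r k * Cc g Ω x r j i + Cc g Ω x a r k * levi g x r j i
            + Cc g Ω x a r k * Cc g Ω x r j i
            - (levi g x a r i * Cc g Ω x r j k + Cc g Ω x a r i * levi g x r j k
            + Cc g Ω x a r i * Cc g Ω x r j k)) := by
  have hpd : ∀ (k a j i : Fin 4), pd k (fun y => levi (fun z => Ω z ^ 2 • g z) y a j i) x
      = pd k (fun y => levi g y a j i) x + pd k (fun y => Cc g Ω y a j i) x := by
    intro k a j i
    rw [pd_congr hU hx (fun y hy => levi_conf hU hg hgsym hginv hΩ hΩpos hy a j i)]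
    exact pd_add (Sm.dAt hU (sm_levi hU hg hginv a j i) hx)
      (Sm.dAt hU (sm_C hU hg hginv hΩ hΩpos a j i) hx)
  unfold riem
  rw [hpd k a j i, hpd i a j k]
  simp only [levi_conf hU hg hgsym hginv hΩ hΩpos hx]
  rw [show (∑ r, ((levi g x a r k + Cc g Ω x a r k) * (levi g x r j i + Cc g Ω x r j i)
      - (levi g x a r i + Cc g Ω x a r i) * (levi g x r j k + Cc g Ω x r j k)))
    = (∑ r, (levi g x a r k * levi g x r j i - levi g x a r i * levi g x r j k))
      + ∑ r, (levi g x a r k * Cc g Ω x r j i + Cc g Ω x a r k * levi g x r j i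
          + Cc g Ω x a r k * Cc g Ω x r j i
          - (levi g x a r i * Cc g Ω x r j k + Cc g Ω x a r i * levi g x r j k
          + Cc g Ω x a r i * Cc g Ω x r j k)) from by
    rw [← Finset.sum_add_distrib]
    exact Finset.sum_congr rfl fun r _ => by ring]
  ring

noncomputable def Xv (g : (Fin 4 → ℝ) → Matrix (Fin 4) (Fin 4) ℝ) (x : Fin 4 → ℝ)
    (ρ : Fin 4) : ℝ :=
  ∑ c, ∑ d, (g x)⁻¹ c d * pd ρ (fun y => g y c d) x

noncomputable def Yv (g : (Fin 4 → ℝ) → Matrix (Fin 4) (Fin 4) ℝ) (x : Fin 4 → ℝ)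
    (μ : Fin 4) : ℝ :=
  ∑ c, ∑ d, (g x)⁻¹ c d * pd d (fun y => g y c μ) x

noncomputable def Qv (g : (Fin 4 → ℝ) → Matrix (Fin 4) (Fin 4) ℝ) (x : Fin 4 → ℝ)
    (a : Fin 4) : ℝ :=
  ∑ j, ∑ i, (g x)⁻¹ j i * levi g x a j i

theorem sum_comm3 (t : Fin 4 → Fin 4 → Fin 4 → ℝ) :
    ∑ j, ∑ i, ∑ r, t j i r = ∑ r, ∑ j, ∑ i, t j i r := by
  calc ∑ j, ∑ i, ∑ r, t j i r
      = ∑ j, ∑ r, ∑ i, t j i r := Finset.sum_congr rfl fun j _ => Finset.sum_comm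
    _ = ∑ r, ∑ j, ∑ i, t j i r := Finset.sum_comm

theorem sum_comm3' (t : Fin 4 → Fin 4 → Fin 4 → ℝ) :
    ∑ r, ∑ j, ∑ i, t j i r = ∑ j, ∑ i, ∑ r, t j i r := (sum_comm3 t).symm

theorem sum_comm4 (t : Fin 4 → Fin 4 → Fin 4 → Fin 4 → ℝ) :
    ∑ j, ∑ i, ∑ a, ∑ r, t j i a r = ∑ a, ∑ r, ∑ j, ∑ i, t j i a r := by
  have h1 : ∀ a, ∑ j, ∑ i, ∑ r, t j i a r = ∑ r, ∑ j, ∑ i, t j i a r :=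
    fun a => sum_comm3 (fun j i r => t j i a r)
  have h2 : ∑ j, ∑ i, ∑ a, ∑ r, t j i a r = ∑ a, ∑ j, ∑ i, ∑ r, t j i a r :=
    sum_comm3 (fun j i a => ∑ r, t j i a r)
  rw [h2]
  exact Finset.sum_congr rfl fun a _ => h1 a

/-- `g^{ji} g_{ji} = 4` -/
theorem tr_GiGm (hgsym : ∀ x ∈ U, (g x)ᵀ = g x) (hginv : ∀ x ∈ U, IsUnit (g x).det)
    (hx : x ∈ U) : ∑ j, ∑ i, (g x)⁻¹ j i * g x j i = 4 := by
  have h : ∀ j, ∑ i, (g x)⁻¹ j i * g x j i = 1 := by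
    intro j
    have h0 : ∑ b, (g x)⁻¹ j b * g x b j = 1 := by simpa using contr₁ hginv hx j j
    rw [← h0]
    exact Finset.sum_congr rfl fun i _ => by rw [gsym hgsym hx j i]
  simp only [h]
  norm_num

/-- `∑_j g^{ji} P_j = T^i` -/
theorem GiP (hgsym : ∀ x ∈ U, (g x)ᵀ = g x) (hx : x ∈ U) (i : Fin 4) :
    ∑ j, (g x)⁻¹ j i * Pv Ω x j = Tv g Ω x i := by
  unfold Tv
  exact Finset.sum_congr rfl fun j _ => by rw [gisym hgsym hx j i]

/-- `∑_j g^{ji} g_{ja} = δ_{ia}` -/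
theorem contr₃ (hgsym : ∀ x ∈ U, (g x)ᵀ = g x) (hginv : ∀ x ∈ U, IsUnit (g x).det)
    (hx : x ∈ U) (i a : Fin 4) :
    ∑ j, (g x)⁻¹ j i * g x j a = if i = a then 1 else 0 := by
  rw [← contr₁ hginv hx i a]
  exact Finset.sum_congr rfl fun j _ => by rw [gisym hgsym hx j i, gsym hgsym hx j a]

/-- contraction of the inverse metric with `Cc` -/
theorem CT (hgsym : ∀ x ∈ U, (g x)ᵀ = g x) (hginv : ∀ x ∈ U, IsUnit (g x).det)
    (hx : x ∈ U) (r : Fin 4) :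
    ∑ j, ∑ i, (g x)⁻¹ j i * Cc g Ω x r j i = -2 * Tv g Ω x r := by
  unfold Cc
  have e1 : ∑ j, ∑ i, (g x)⁻¹ j i * (if r = j then Pv Ω x i else 0) = Tv g Ω x r := by
    rw [Finset.sum_comm]
    have : ∀ i, ∑ j, (g x)⁻¹ j i * (if r = j then Pv Ω x i else 0)
        = (g x)⁻¹ r i * Pv Ω x i := by
      intro i
      rw [Finset.sum_eq_single r]
      · simp
      · intro b _ hb; simp [Ne.symm hb]
      · simp
    simp only [this]
    exact Finset.sum_congr rfl fun i _ => by rw [gisym hgsym hx r i]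
  have e2 : ∑ j, ∑ i, (g x)⁻¹ j i * (if r = i then Pv Ω x j else 0) = Tv g Ω x r := by
    have h1 : ∀ j, ∑ i, (g x)⁻¹ j i * (if r = i then Pv Ω x j else 0)
        = (g x)⁻¹ j r * Pv Ω x j := by
      intro j
      rw [Finset.sum_eq_single r]
      · simp
      · intro b _ hb; simp [Ne.symm hb]
      · simp
    simp only [h1]
    exact GiP hgsym hx r
  have e3 : ∑ j, ∑ i, (g x)⁻¹ j i * (g x j i * Tv g Ω x r) = 4 * Tv g Ω x r := by
    have h1 : ∑ j, ∑ i, (g x)⁻¹ j i * (g x j i * Tv g Ω x r)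
        = (∑ j, ∑ i, (g x)⁻¹ j i * g x j i) * Tv g Ω x r := by
      simp only [Finset.sum_mul]
      exact Finset.sum_congr rfl fun j _ => Finset.sum_congr rfl fun i _ => by ring
    rw [h1, tr_GiGm hgsym hginv hx]
  simp only [mul_add, mul_sub, Finset.sum_add_distrib, Finset.sum_sub_distrib]
  rw [e1, e2, e3]
  ring

/-- `∑_a Λ^a_{ra} = X_r / 2` -/
theorem trace_L (hU : IsOpen U)
    (hg : ∀ μ ν : Fin 4, ContDiffOn ℝ (⊤ : ℕ∞) (fun x => g x μ ν) U)
    (hgsym : ∀ x ∈ U, (g x)ᵀ = g x) (hginv : ∀ x ∈ U, IsUnit (g x).det)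
    (hx : x ∈ U) (r : Fin 4) :
    ∑ a, levi g x a r a = (1 / 2) * Xv g x r := by
  unfold levi
  rw [← Finset.mul_sum]
  congr 1
  have e1 : ∑ a, ∑ μ, (g x)⁻¹ a μ * pd a (fun y => g y r μ) x
      = ∑ a, ∑ μ, (g x)⁻¹ a μ * pd μ (fun y => g y r a) x := by
    rw [Finset.sum_comm]
    exact Finset.sum_congr rfl fun μ _ => Finset.sum_congr rfl fun a _ => by
      rw [gisym hgsym hx μ a]
  have e2 : ∑ a, ∑ μ, (g x)⁻¹ a μ * pd r (fun y => g y μ a) x = Xv g x r := by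
    unfold Xv
    exact Finset.sum_congr rfl fun a _ => Finset.sum_congr rfl fun μ _ => by
      rw [dgsym hU hgsym hx r μ a]
  have e0 : ∑ a, ∑ μ, (g x)⁻¹ a μ *
        (pd a (fun y => g y r μ) x + pd r (fun y => g y μ a) x - pd μ (fun y => g y r a) x)
      = (∑ a, ∑ μ, (g x)⁻¹ a μ * pd a (fun y => g y r μ) x)
        + (∑ a, ∑ μ, (g x)⁻¹ a μ * pd r (fun y => g y μ a) x)
        - ∑ a, ∑ μ, (g x)⁻¹ a μ * pd μ (fun y => g y r a) x := by
    simp only [mul_add, mul_sub, Finset.sum_add_distrib, Finset.sum_sub_distrib]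
  rw [e0, e1, e2]
  ring

/-- `∑_a Λ^a_{ar} = X_r / 2` -/
theorem trace_L' (hU : IsOpen U)
    (hg : ∀ μ ν : Fin 4, ContDiffOn ℝ (⊤ : ℕ∞) (fun x => g x μ ν) U)
    (hgsym : ∀ x ∈ U, (g x)ᵀ = g x) (hginv : ∀ x ∈ U, IsUnit (g x).det)
    (hx : x ∈ U) (r : Fin 4) :
    ∑ a, levi g x a a r = (1 / 2) * Xv g x r := by
  rw [← trace_L hU hg hgsym hginv hx r]
  exact Finset.sum_congr rfl fun a _ => levi_lower_symm hU hgsym hx a a r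


theorem Y2 (hU : IsOpen U) (hgsym : ∀ x ∈ U, (g x)ᵀ = g x) (hx : x ∈ U) (μ : Fin 4) :
    ∑ j, ∑ i, (g x)⁻¹ j i * pd j (fun y => g y μ i) x = Yv g x μ := by
  have h1 : ∑ j, ∑ i, (g x)⁻¹ j i * pd j (fun y => g y μ i) x
      = ∑ j, ∑ i, (g x)⁻¹ j i * pd j (fun y => g y i μ) x :=
    Finset.sum_congr rfl fun j _ => Finset.sum_congr rfl fun i _ => by
      rw [dgsym hU hgsym hx j μ i]
  rw [h1, Finset.sum_comm]
  exact Finset.sum_congr rfl fun i _ => Finset.sum_congr rfl fun j _ => by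
    rw [gisym hgsym hx j i]

theorem q_eq (hU : IsOpen U)
    (hg : ∀ μ ν : Fin 4, ContDiffOn ℝ (⊤ : ℕ∞) (fun x => g x μ ν) U)
    (hgsym : ∀ x ∈ U, (g x)ᵀ = g x) (hginv : ∀ x ∈ U, IsUnit (g x).det)
    (hx : x ∈ U) (a : Fin 4) :
    Qv g x a = ∑ μ, (g x)⁻¹ a μ * (Yv g x μ - (1 / 2) * Xv g x μ) := by
  unfold Qv
  have h1 : ∀ j i : Fin 4, (g x)⁻¹ j i * levi g x a j i
      = ∑ μ, (1 / 2) * ((g x)⁻¹ a μ * ((g x)⁻¹ j i *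
          (pd i (fun y => g y j μ) x + pd j (fun y => g y μ i) x
            - pd μ (fun y => g y j i) x))) := by
    intro j i
    unfold levi
    simp only [Finset.mul_sum]
    exact Finset.sum_congr rfl fun μ _ => by ring
  simp only [h1]
  rw [sum_comm3 (fun j i μ => (1 / 2) * ((g x)⁻¹ a μ * ((g x)⁻¹ j i *
    (pd i (fun y => g y j μ) x + pd j (fun y => g y μ i) x - pd μ (fun y => g y j i) x))))]
  refine Finset.sum_congr rfl fun μ _ => ?_
  have h2 : ∑ j, ∑ i, (1 / 2) * ((g x)⁻¹ a μ * ((g x)⁻¹ j i *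
      (pd i (fun y => g y j μ) x + pd j (fun y => g y μ i) x - pd μ (fun y => g y j i) x)))
      = (1 / 2) * ((g x)⁻¹ a μ *
          ((∑ j, ∑ i, (g x)⁻¹ j i * pd i (fun y => g y j μ) x)
            + (∑ j, ∑ i, (g x)⁻¹ j i * pd j (fun y => g y μ i) x)
            - ∑ j, ∑ i, (g x)⁻¹ j i * pd μ (fun y => g y j i) x)) := by
    simp only [mul_add, mul_sub, Finset.sum_add_distrib, Finset.sum_sub_distrib,
      Finset.mul_sum]
  rw [h2, Y2 hU hgsym hx μ]
  have h3 : ∑ j, ∑ i, (g x)⁻¹ j i * pd i (fun y => g y j μ) x = Yv g x μ := rfl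
  have h4 : ∑ j, ∑ i, (g x)⁻¹ j i * pd μ (fun y => g y j i) x = Xv g x μ := rfl
  rw [h3, h4]
  ring

theorem PQ_eq (hU : IsOpen U)
    (hg : ∀ μ ν : Fin 4, ContDiffOn ℝ (⊤ : ℕ∞) (fun x => g x μ ν) U)
    (hgsym : ∀ x ∈ U, (g x)ᵀ = g x) (hginv : ∀ x ∈ U, IsUnit (g x).det)
    (hx : x ∈ U) :
    ∑ a, Pv Ω x a * Qv g x a
      = ∑ μ, Tv g Ω x μ * (Yv g x μ - (1 / 2) * Xv g x μ) := by
  simp only [q_eq hU hg hgsym hginv hx]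
  simp only [Finset.mul_sum]
  rw [Finset.sum_comm]
  refine Finset.sum_congr rfl fun μ _ => ?_
  have h1 : ∑ a, Pv Ω x a * ((g x)⁻¹ a μ * (Yv g x μ - (1 / 2) * Xv g x μ))
      = (∑ a, (g x)⁻¹ a μ * Pv Ω x a) * (Yv g x μ - (1 / 2) * Xv g x μ) := by
    rw [Finset.sum_mul]
    exact Finset.sum_congr rfl fun a _ => by ring
  rw [h1, GiP hgsym hx μ]

/-- diagonal derivative of the inverse metric, contracted  -/
theorem Dd_eq (hU : IsOpen U)
    (hg : ∀ μ ν : Fin 4, ContDiffOn ℝ (⊤ : ℕ∞) (fun x => g x μ ν) U)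
    (hgsym : ∀ x ∈ U, (g x)ᵀ = g x) (hginv : ∀ x ∈ U, IsUnit (g x).det)
    (hx : x ∈ U) :
    ∑ a, ∑ μ, pd a (fun y => (g y)⁻¹ a μ) x * Pv Ω x μ
      = -∑ c, Yv g x c * Tv g Ω x c := by
  simp only [pd_inv hU hg hginv hx]
  have h1 : ∀ a : Fin 4,
      ∑ μ, (-∑ c, ∑ d, (g x)⁻¹ a d * pd a (fun y => g y d c) x * (g x)⁻¹ c μ) * Pv Ω x μ
      = -∑ c, ∑ d, ((g x)⁻¹ a d * pd a (fun y => g y d c) x) * Tv g Ω x c := by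
    intro a
    have k1 : ∀ μ, (-∑ c, ∑ d, (g x)⁻¹ a d * pd a (fun y => g y d c) x * (g x)⁻¹ c μ)
        * Pv Ω x μ
        = -∑ c, ∑ d, ((g x)⁻¹ a d * pd a (fun y => g y d c) x) * ((g x)⁻¹ c μ * Pv Ω x μ) := by
      intro μ
      rw [neg_mul, neg_inj, Finset.sum_mul]
      exact Finset.sum_congr rfl fun c _ => by
        rw [Finset.sum_mul]
        exact Finset.sum_congr rfl fun d _ => by ring
    simp only [k1]
    rw [Finset.sum_neg_distrib, neg_inj]
    rw [← sum_comm3 (fun c d μ => ((g x)⁻¹ a d * pd a (fun y => g y d c) x)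
      * ((g x)⁻¹ c μ * Pv Ω x μ))]
    refine Finset.sum_congr rfl fun c _ => Finset.sum_congr rfl fun d _ => ?_
    rw [← Finset.mul_sum]
    rfl
  simp only [h1]
  rw [Finset.sum_neg_distrib, neg_inj, Finset.sum_comm]
  refine Finset.sum_congr rfl fun c _ => ?_
  have k2 : ∑ a, ∑ d, ((g x)⁻¹ a d * pd a (fun y => g y d c) x) * Tv g Ω x c
      = (∑ a, ∑ d, (g x)⁻¹ a d * pd a (fun y => g y d c) x) * Tv g Ω x c := by
    rw [Finset.sum_mul]
    exact Finset.sum_congr rfl fun a _ => by rw [Finset.sum_mul]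
  rw [k2]
  congr 1
  rw [Finset.sum_comm]
  exact Finset.sum_congr rfl fun d _ => Finset.sum_congr rfl fun a _ => by
    rw [gisym hgsym hx a d]

theorem sum_pdT (hU : IsOpen U)
    (hg : ∀ μ ν : Fin 4, ContDiffOn ℝ (⊤ : ℕ∞) (fun x => g x μ ν) U)
    (hgsym : ∀ x ∈ U, (g x)ᵀ = g x) (hginv : ∀ x ∈ U, IsUnit (g x).det)
    (hΩ : ContDiffOn ℝ (⊤ : ℕ∞) Ω U) (hΩpos : ∀ x ∈ U, 0 < Ω x) (hx : x ∈ U) :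
    ∑ a, pd a (fun y => Tv g Ω y a) x
      = -∑ c, Yv g x c * Tv g Ω x c
        + ∑ μ, ∑ ν, (g x)⁻¹ μ ν * pd μ (fun y => Pv Ω y ν) x := by
  simp only [pd_T hU hg hginv hΩ hΩpos hx]
  simp only [Finset.sum_add_distrib]
  rw [Dd_eq hU hg hgsym hginv hx]

theorem Hsym (hgsym : ∀ x ∈ U, (g x)ᵀ = g x) (hx : x ∈ U) :
    ∑ j, ∑ i, (g x)⁻¹ j i * pd i (fun y => Pv Ω y j) x
      = ∑ μ, ∑ ν, (g x)⁻¹ μ ν * pd μ (fun y => Pv Ω y ν) x := by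
  rw [Finset.sum_comm]
  exact Finset.sum_congr rfl fun i _ => Finset.sum_congr rfl fun j _ => by
    rw [gisym hgsym hx j i]

theorem PB (hU : IsOpen U)
    (hg : ∀ μ ν : Fin 4, ContDiffOn ℝ (⊤ : ℕ∞) (fun x => g x μ ν) U)
    (hgsym : ∀ x ∈ U, (g x)ᵀ = g x) (hginv : ∀ x ∈ U, IsUnit (g x).det)
    (hΩ : ContDiffOn ℝ (⊤ : ℕ∞) Ω U) (hΩpos : ∀ x ∈ U, 0 < Ω x) (hx : x ∈ U) :
    ∑ j, ∑ i, (g x)⁻¹ j i * ∑ a, pd i (fun y => Cc g Ω y a j a) x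
      = 4 * ∑ μ, ∑ ν, (g x)⁻¹ μ ν * pd μ (fun y => Pv Ω y ν) x := by
  simp only [sum_pdC_trace hU hg hgsym hginv hΩ hΩpos hx]
  rw [← Hsym hgsym hx, Finset.mul_sum]
  refine Finset.sum_congr rfl fun j _ => ?_
  rw [Finset.mul_sum]
  exact Finset.sum_congr rfl fun i _ => by ring

theorem PA (hU : IsOpen U)
    (hg : ∀ μ ν : Fin 4, ContDiffOn ℝ (⊤ : ℕ∞) (fun x => g x μ ν) U)
    (hgsym : ∀ x ∈ U, (g x)ᵀ = g x) (hginv : ∀ x ∈ U, IsUnit (g x).det)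
    (hΩ : ContDiffOn ℝ (⊤ : ℕ∞) Ω U) (hΩpos : ∀ x ∈ U, 0 < Ω x) (hx : x ∈ U) :
    ∑ j, ∑ i, (g x)⁻¹ j i * ∑ a, pd a (fun y => Cc g Ω y a j i) x
      = -2 * (∑ μ, ∑ ν, (g x)⁻¹ μ ν * pd μ (fun y => Pv Ω y ν) x)
        - ∑ ρ, Xv g x ρ * Tv g Ω x ρ + 4 * ∑ ρ, Yv g x ρ * Tv g Ω x ρ := by
  have hCsum : ∀ j i : Fin 4, ∑ a, pd a (fun y => Cc g Ω y a j i) x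
      = pd j (fun y => Pv Ω y i) x + pd i (fun y => Pv Ω y j) x
        - ∑ a, (pd a (fun y => g y j i) x * Tv g Ω x a)
        - g x j i * ∑ a, pd a (fun y => Tv g Ω y a) x := by
    intro j i
    simp only [pd_C hU hg hginv hΩ hΩpos hx]
    rw [Finset.sum_sub_distrib, Finset.sum_add_distrib, Finset.sum_add_distrib]
    have d1 : ∑ a, (if a = j then pd a (fun y => Pv Ω y i) x else 0)
        = pd j (fun y => Pv Ω y i) x := by simp
    have d2 : ∑ a, (if a = i then pd a (fun y => Pv Ω y j) x else 0)
        = pd i (fun y => Pv Ω y j) x := by simp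
    rw [d1, d2, ← Finset.mul_sum]
    ring
  simp only [hCsum]
  have expand : ∀ j i : Fin 4, (g x)⁻¹ j i *
      (pd j (fun y => Pv Ω y i) x + pd i (fun y => Pv Ω y j) x
        - ∑ a, (pd a (fun y => g y j i) x * Tv g Ω x a)
        - g x j i * ∑ a, pd a (fun y => Tv g Ω y a) x)
      = (g x)⁻¹ j i * pd j (fun y => Pv Ω y i) x
        + (g x)⁻¹ j i * pd i (fun y => Pv Ω y j) x
        - ∑ a, (g x)⁻¹ j i * (pd a (fun y => g y j i) x * Tv g Ω x a)
        - ((g x)⁻¹ j i * g x j i) * ∑ a, pd a (fun y => Tv g Ω y a) x := by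
    intro j i
    rw [← Finset.mul_sum]
    ring
  simp only [expand]
  simp only [Finset.sum_add_distrib, Finset.sum_sub_distrib]
  have p2 := Hsym (g := g) (Ω := Ω) hgsym hx
  have p3 : ∑ j, ∑ i, ∑ a, (g x)⁻¹ j i * (pd a (fun y => g y j i) x * Tv g Ω x a)
      = ∑ ρ, Xv g x ρ * Tv g Ω x ρ := by
    rw [sum_comm3 (fun j i a => (g x)⁻¹ j i * (pd a (fun y => g y j i) x * Tv g Ω x a))]
    refine Finset.sum_congr rfl fun a _ => ?_
    unfold Xv
    rw [Finset.sum_mul]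
    refine Finset.sum_congr rfl fun j _ => ?_
    rw [Finset.sum_mul]
    exact Finset.sum_congr rfl fun i _ => by ring
  have p4 : ∑ j, ∑ i, ((g x)⁻¹ j i * g x j i) * ∑ a, pd a (fun y => Tv g Ω y a) x
      = 4 * ∑ a, pd a (fun y => Tv g Ω y a) x := by
    have : ∑ j, ∑ i, ((g x)⁻¹ j i * g x j i) * (∑ a, pd a (fun y => Tv g Ω y a) x)
        = (∑ j, ∑ i, (g x)⁻¹ j i * g x j i) * ∑ a, pd a (fun y => Tv g Ω y a) x := by
      rw [Finset.sum_mul]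
      exact Finset.sum_congr rfl fun j _ => by rw [Finset.sum_mul]
    rw [this, tr_GiGm hgsym hginv hx]
  rw [p2, p3, p4, sum_pdT hU hg hgsym hginv hΩ hΩpos hx]
  ring

theorem pull_const (A : Fin 4 → Fin 4 → ℝ) (c : ℝ) (F : Fin 4 → Fin 4 → ℝ) :
    ∑ j, ∑ i, A j i * (c * F j i) = c * ∑ j, ∑ i, A j i * F j i := by
  rw [Finset.mul_sum]
  refine Finset.sum_congr rfl fun j _ => ?_
  rw [Finset.mul_sum]
  exact Finset.sum_congr rfl fun i _ => by ring

theorem D1 (hU : IsOpen U)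
    (hg : ∀ μ ν : Fin 4, ContDiffOn ℝ (⊤ : ℕ∞) (fun x => g x μ ν) U)
    (hgsym : ∀ x ∈ U, (g x)ᵀ = g x) (hginv : ∀ x ∈ U, IsUnit (g x).det)
    (hx : x ∈ U) :
    ∑ j, ∑ i, (g x)⁻¹ j i * ∑ a, ∑ r, levi g x a r a * Cc g Ω x r j i
      = -∑ ρ, Xv g x ρ * Tv g Ω x ρ := by
  have inner : ∀ j i : Fin 4, ∑ a, ∑ r, levi g x a r a * Cc g Ω x r j i
      = ∑ r, (1 / 2) * Xv g x r * Cc g Ω x r j i := by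
    intro j i
    rw [Finset.sum_comm]
    refine Finset.sum_congr rfl fun r _ => ?_
    rw [← Finset.sum_mul, trace_L hU hg hgsym hginv hx r]
  simp only [inner]
  simp only [Finset.mul_sum]
  rw [sum_comm3 (fun j i r => (g x)⁻¹ j i * ((1 / 2) * Xv g x r * Cc g Ω x r j i))]
  rw [← Finset.sum_neg_distrib]
  refine Finset.sum_congr rfl fun r _ => ?_
  rw [pull_const (fun j i => (g x)⁻¹ j i) ((1 / 2) * Xv g x r) (fun j i => Cc g Ω x r j i),
    CT hgsym hginv hx r]
  ring

theorem D2 (hU : IsOpen U)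
    (hg : ∀ μ ν : Fin 4, ContDiffOn ℝ (⊤ : ℕ∞) (fun x => g x μ ν) U)
    (hgsym : ∀ x ∈ U, (g x)ᵀ = g x) (hginv : ∀ x ∈ U, IsUnit (g x).det)
    (hx : x ∈ U) :
    ∑ j, ∑ i, (g x)⁻¹ j i * ∑ a, ∑ r, Cc g Ω x a r a * levi g x r j i
      = 4 * ∑ ρ, Pv Ω x ρ * Qv g x ρ := by
  have inner : ∀ j i : Fin 4, ∑ a, ∑ r, Cc g Ω x a r a * levi g x r j i
      = ∑ r, 4 * Pv Ω x r * levi g x r j i := by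
    intro j i
    rw [Finset.sum_comm]
    refine Finset.sum_congr rfl fun r _ => ?_
    rw [← Finset.sum_mul, trace_C hgsym hginv hx r]
  simp only [inner]
  simp only [Finset.mul_sum]
  rw [sum_comm3 (fun j i r => (g x)⁻¹ j i * (4 * Pv Ω x r * levi g x r j i))]
  refine Finset.sum_congr rfl fun r _ => ?_
  rw [pull_const (fun j i => (g x)⁻¹ j i) (4 * Pv Ω x r) (fun j i => levi g x r j i)]
  unfold Qv
  ring

theorem D3 (hU : IsOpen U)
    (hg : ∀ μ ν : Fin 4, ContDiffOn ℝ (⊤ : ℕ∞) (fun x => g x μ ν) U)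
    (hgsym : ∀ x ∈ U, (g x)ᵀ = g x) (hginv : ∀ x ∈ U, IsUnit (g x).det)
    (hx : x ∈ U) :
    ∑ j, ∑ i, (g x)⁻¹ j i * ∑ a, ∑ r, Cc g Ω x a r a * Cc g Ω x r j i
      = -8 * ∑ ρ, Pv Ω x ρ * Tv g Ω x ρ := by
  have inner : ∀ j i : Fin 4, ∑ a, ∑ r, Cc g Ω x a r a * Cc g Ω x r j i
      = ∑ r, 4 * Pv Ω x r * Cc g Ω x r j i := by
    intro j i
    rw [Finset.sum_comm]
    refine Finset.sum_congr rfl fun r _ => ?_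
    rw [← Finset.sum_mul, trace_C hgsym hginv hx r]
  simp only [inner]
  simp only [Finset.mul_sum]
  rw [sum_comm3 (fun j i r => (g x)⁻¹ j i * (4 * Pv Ω x r * Cc g Ω x r j i))]
  refine Finset.sum_congr rfl fun r _ => ?_
  rw [pull_const (fun j i => (g x)⁻¹ j i) (4 * Pv Ω x r) (fun j i => Cc g Ω x r j i),
    CT hgsym hginv hx r]
  ring

theorem sum_rot3 (t : Fin 4 → Fin 4 → Fin 4 → ℝ) :
    ∑ j, ∑ a, ∑ r, t j a r = ∑ a, ∑ r, ∑ j, t j a r := by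
  rw [Finset.sum_comm]
  exact Finset.sum_congr rfl fun a _ => Finset.sum_comm

/-- `∑_j g^{ji} g_{ja} = δ_{ia}` (second version) -/
theorem contr₅ (hgsym : ∀ x ∈ U, (g x)ᵀ = g x) (hginv : ∀ x ∈ U, IsUnit (g x).det)
    (hx : x ∈ U) (i a : Fin 4) :
    ∑ j, (g x)⁻¹ j i * g x j a = if i = a then 1 else 0 := contr₃ hgsym hginv hx i a

theorem D4a (hU : IsOpen U)
    (hg : ∀ μ ν : Fin 4, ContDiffOn ℝ (⊤ : ℕ∞) (fun x => g x μ ν) U)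
    (hgsym : ∀ x ∈ U, (g x)ᵀ = g x) (hginv : ∀ x ∈ U, IsUnit (g x).det)
    (hx : x ∈ U) :
    ∑ j, ∑ i, (g x)⁻¹ j i * ∑ a, ∑ r, levi g x a r i * (if r = j then Pv Ω x a else 0)
      = ∑ ρ, Pv Ω x ρ * Qv g x ρ := by
  have inner : ∀ j i a : Fin 4, ∑ r, levi g x a r i * (if r = j then Pv Ω x a else 0)
      = levi g x a j i * Pv Ω x a := by
    intro j i a
    rw [Finset.sum_eq_single j]
    · simp
    · intro b _ hb; simp [hb]
    · simp
  simp only [inner]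
  simp only [Finset.mul_sum]
  rw [sum_comm3 (fun j i a => (g x)⁻¹ j i * (levi g x a j i * Pv Ω x a))]
  refine Finset.sum_congr rfl fun a _ => ?_
  unfold Qv
  rw [Finset.mul_sum]
  refine Finset.sum_congr rfl fun j _ => ?_
  rw [Finset.mul_sum]
  exact Finset.sum_congr rfl fun i _ => by ring

theorem D4b (hU : IsOpen U)
    (hg : ∀ μ ν : Fin 4, ContDiffOn ℝ (⊤ : ℕ∞) (fun x => g x μ ν) U)
    (hgsym : ∀ x ∈ U, (g x)ᵀ = g x) (hginv : ∀ x ∈ U, IsUnit (g x).det)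
    (hx : x ∈ U) :
    ∑ j, ∑ i, (g x)⁻¹ j i * ∑ a, ∑ r, levi g x a r i * (if r = a then Pv Ω x j else 0)
      = ∑ ρ, (1 / 2) * Xv g x ρ * Tv g Ω x ρ := by
  have inner : ∀ j i : Fin 4, ∑ a, ∑ r, levi g x a r i * (if r = a then Pv Ω x j else 0)
      = (1 / 2) * Xv g x i * Pv Ω x j := by
    intro j i
    have h1 : ∀ a : Fin 4, ∑ r, levi g x a r i * (if r = a then Pv Ω x j else 0)
        = levi g x a a i * Pv Ω x j := by
      intro a
      rw [Finset.sum_eq_single a]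
      · simp
      · intro b _ hb; simp [hb]
      · simp
    simp only [h1]
    rw [← Finset.sum_mul, trace_L' hU hg hgsym hginv hx i]
  simp only [inner]
  rw [Finset.sum_comm]
  refine Finset.sum_congr rfl fun i _ => ?_
  have h2 : ∑ j, (g x)⁻¹ j i * ((1 / 2) * Xv g x i * Pv Ω x j)
      = ((1 / 2) * Xv g x i) * ∑ j, (g x)⁻¹ j i * Pv Ω x j := by
    rw [Finset.mul_sum]
    exact Finset.sum_congr rfl fun j _ => by ring
  rw [h2, GiP hgsym hx i]

theorem D4c (hU : IsOpen U)
    (hg : ∀ μ ν : Fin 4, ContDiffOn ℝ (⊤ : ℕ∞) (fun x => g x μ ν) U)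
    (hgsym : ∀ x ∈ U, (g x)ᵀ = g x) (hginv : ∀ x ∈ U, IsUnit (g x).det)
    (hx : x ∈ U) :
    ∑ j, ∑ i, (g x)⁻¹ j i * ∑ a, ∑ r, levi g x a r i * (g x j a * Tv g Ω x r)
      = ∑ ρ, (1 / 2) * Xv g x ρ * Tv g Ω x ρ := by
  simp only [Finset.mul_sum]
  rw [Finset.sum_comm]
  have step1 : ∀ i : Fin 4, ∑ j, ∑ a, ∑ r, (g x)⁻¹ j i * (levi g x a r i * (g x j a * Tv g Ω x r))
      = ∑ a, ∑ r, (if i = a then 1 else 0) * (levi g x a r i * Tv g Ω x r) := by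
    intro i
    rw [sum_rot3 (fun j a r => (g x)⁻¹ j i * (levi g x a r i * (g x j a * Tv g Ω x r)))]
    refine Finset.sum_congr rfl fun a _ => Finset.sum_congr rfl fun r _ => ?_
    rw [← contr₅ hgsym hginv hx i a, Finset.sum_mul]
    exact Finset.sum_congr rfl fun j _ => by ring
  simp only [step1]
  have step2 : ∀ i : Fin 4, ∑ a, ∑ r, (if i = a then (1:ℝ) else 0) * (levi g x a r i * Tv g Ω x r)
      = ∑ r, levi g x i r i * Tv g Ω x r := by
    intro i
    rw [Finset.sum_eq_single i]
    · simp
    · intro b _ hb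
      have : ∀ r, (if i = b then (1:ℝ) else 0) * (levi g x b r i * Tv g Ω x r) = 0 := by
        intro r; simp [Ne.symm hb]  -- i ≠ b
      simp [this]
    · simp
  simp only [step2]
  rw [Finset.sum_comm]
  refine Finset.sum_congr rfl fun r _ => ?_
  rw [← Finset.sum_mul, trace_L hU hg hgsym hginv hx r]

theorem D4 (hU : IsOpen U)
    (hg : ∀ μ ν : Fin 4, ContDiffOn ℝ (⊤ : ℕ∞) (fun x => g x μ ν) U)
    (hgsym : ∀ x ∈ U, (g x)ᵀ = g x) (hginv : ∀ x ∈ U, IsUnit (g x).det)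
    (hx : x ∈ U) :
    ∑ j, ∑ i, (g x)⁻¹ j i * ∑ a, ∑ r, levi g x a r i * Cc g Ω x r j a
      = ∑ ρ, Pv Ω x ρ * Qv g x ρ := by
  have expand : ∀ j i : Fin 4, ∑ a, ∑ r, levi g x a r i * Cc g Ω x r j a
      = (∑ a, ∑ r, levi g x a r i * (if r = j then Pv Ω x a else 0))
        + (∑ a, ∑ r, levi g x a r i * (if r = a then Pv Ω x j else 0))
        - ∑ a, ∑ r, levi g x a r i * (g x j a * Tv g Ω x r) := by
    intro j i
    unfold Cc
    simp only [mul_add, mul_sub, Finset.sum_add_distrib, Finset.sum_sub_distrib]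
  simp only [expand, mul_add, mul_sub, Finset.sum_add_distrib, Finset.sum_sub_distrib]
  rw [D4a hU hg hgsym hginv hx, D4b hU hg hgsym hginv hx, D4c hU hg hgsym hginv hx]
  ring

theorem D5a (hU : IsOpen U)
    (hg : ∀ μ ν : Fin 4, ContDiffOn ℝ (⊤ : ℕ∞) (fun x => g x μ ν) U)
    (hgsym : ∀ x ∈ U, (g x)ᵀ = g x) (hginv : ∀ x ∈ U, IsUnit (g x).det)
    (hx : x ∈ U) :
    ∑ j, ∑ i, (g x)⁻¹ j i * ∑ a, ∑ r, (if a = r then Pv Ω x i else 0) * levi g x r j a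
      = ∑ ρ, (1 / 2) * Xv g x ρ * Tv g Ω x ρ := by
  have inner : ∀ j i : Fin 4, ∑ a, ∑ r, (if a = r then Pv Ω x i else 0) * levi g x r j a
      = Pv Ω x i * ((1 / 2) * Xv g x j) := by
    intro j i
    have h1 : ∀ a : Fin 4, ∑ r, (if a = r then Pv Ω x i else 0) * levi g x r j a
        = Pv Ω x i * levi g x a j a := by
      intro a
      rw [Finset.sum_eq_single a]
      · simp
      · intro b _ hb; simp [Ne.symm hb]
      · simp
    simp only [h1]
    rw [← Finset.mul_sum, trace_L hU hg hgsym hginv hx j]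
  simp only [inner]
  refine Finset.sum_congr rfl fun j _ => ?_
  have h2 : ∑ i, (g x)⁻¹ j i * (Pv Ω x i * ((1 / 2) * Xv g x j))
      = ((1 / 2) * Xv g x j) * ∑ i, (g x)⁻¹ j i * Pv Ω x i := by
    rw [Finset.mul_sum]
    exact Finset.sum_congr rfl fun i _ => by ring
  rw [h2]
  unfold Tv
  ring

theorem D5b (hU : IsOpen U)
    (hg : ∀ μ ν : Fin 4, ContDiffOn ℝ (⊤ : ℕ∞) (fun x => g x μ ν) U)
    (hgsym : ∀ x ∈ U, (g x)ᵀ = g x) (hginv : ∀ x ∈ U, IsUnit (g x).det)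
    (hx : x ∈ U) :
    ∑ j, ∑ i, (g x)⁻¹ j i * ∑ a, ∑ r, (if a = i then Pv Ω x r else 0) * levi g x r j a
      = ∑ ρ, Pv Ω x ρ * Qv g x ρ := by
  have inner : ∀ j i : Fin 4, ∑ a, ∑ r, (if a = i then Pv Ω x r else 0) * levi g x r j a
      = ∑ r, Pv Ω x r * levi g x r j i := by
    intro j i
    rw [Finset.sum_eq_single i]
    · exact Finset.sum_congr rfl fun r _ => by simp
    · intro b _ hb
      have : ∀ r, (if b = i then Pv Ω x r else 0) * levi g x r j b = 0 := by
        intro r; simp [hb]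
      simp [this]
    · simp
  simp only [inner]
  simp only [Finset.mul_sum]
  rw [sum_comm3 (fun j i r => (g x)⁻¹ j i * (Pv Ω x r * levi g x r j i))]
  refine Finset.sum_congr rfl fun r _ => ?_
  unfold Qv
  rw [Finset.mul_sum]
  refine Finset.sum_congr rfl fun j _ => ?_
  rw [Finset.mul_sum]
  exact Finset.sum_congr rfl fun i _ => by ring

theorem D5c (hU : IsOpen U)
    (hg : ∀ μ ν : Fin 4, ContDiffOn ℝ (⊤ : ℕ∞) (fun x => g x μ ν) U)
    (hgsym : ∀ x ∈ U, (g x)ᵀ = g x) (hginv : ∀ x ∈ U, IsUnit (g x).det)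
    (hx : x ∈ U) :
    ∑ j, ∑ i, (g x)⁻¹ j i * ∑ a, ∑ r, (g x r i * Tv g Ω x a) * levi g x r j a
      = ∑ ρ, (1 / 2) * Xv g x ρ * Tv g Ω x ρ := by
  simp only [Finset.mul_sum]
  have step1 : ∀ j : Fin 4, ∑ i, ∑ a, ∑ r, (g x)⁻¹ j i * ((g x r i * Tv g Ω x a) * levi g x r j a)
      = ∑ a, ∑ r, (if j = r then 1 else 0) * (Tv g Ω x a * levi g x r j a) := by
    intro j
    rw [sum_rot3 (fun i a r => (g x)⁻¹ j i * ((g x r i * Tv g Ω x a) * levi g x r j a))]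
    refine Finset.sum_congr rfl fun a _ => Finset.sum_congr rfl fun r _ => ?_
    have hc : ∑ i, (g x)⁻¹ j i * g x i r = if j = r then 1 else 0 := contr₁ hginv hx j r
    rw [← hc, Finset.sum_mul]
    refine Finset.sum_congr rfl fun i _ => ?_
    rw [gsym hgsym hx r i]
    ring
  simp only [step1]
  have step2 : ∀ j : Fin 4, ∑ a, ∑ r, (if j = r then (1:ℝ) else 0) * (Tv g Ω x a * levi g x r j a)
      = ∑ a, Tv g Ω x a * levi g x j j a := by
    intro j
    refine Finset.sum_congr rfl fun a _ => ?_
    rw [Finset.sum_eq_single j]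
    · simp
    · intro b _ hb; simp [Ne.symm hb]
    · simp
  simp only [step2]
  rw [Finset.sum_comm]
  refine Finset.sum_congr rfl fun a _ => ?_
  rw [← Finset.mul_sum, trace_L' hU hg hgsym hginv hx a]
  ring

theorem D5 (hU : IsOpen U)
    (hg : ∀ μ ν : Fin 4, ContDiffOn ℝ (⊤ : ℕ∞) (fun x => g x μ ν) U)
    (hgsym : ∀ x ∈ U, (g x)ᵀ = g x) (hginv : ∀ x ∈ U, IsUnit (g x).det)
    (hx : x ∈ U) :
    ∑ j, ∑ i, (g x)⁻¹ j i * ∑ a, ∑ r, Cc g Ω x a r i * levi g x r j a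
      = ∑ ρ, Pv Ω x ρ * Qv g x ρ := by
  have expand : ∀ j i : Fin 4, ∑ a, ∑ r, Cc g Ω x a r i * levi g x r j a
      = (∑ a, ∑ r, (if a = r then Pv Ω x i else 0) * levi g x r j a)
        + (∑ a, ∑ r, (if a = i then Pv Ω x r else 0) * levi g x r j a)
        - ∑ a, ∑ r, (g x r i * Tv g Ω x a) * levi g x r j a := by
    intro j i
    unfold Cc
    simp only [add_mul, sub_mul, Finset.sum_add_distrib, Finset.sum_sub_distrib]
  simp only [expand, mul_add, mul_sub, Finset.sum_add_distrib, Finset.sum_sub_distrib]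
  rw [D5a hU hg hgsym hginv hx, D5b hU hg hgsym hginv hx, D5c hU hg hgsym hginv hx]
  ring

theorem trace_GT' (hgsym : ∀ x ∈ U, (g x)ᵀ = g x) (hginv : ∀ x ∈ U, IsUnit (g x).det)
    (hx : x ∈ U) (j : Fin 4) :
    ∑ a, g x a j * Tv g Ω x a = Pv Ω x j := by
  rw [← trace_GT (Ω := Ω) hgsym hginv hx j]
  exact Finset.sum_congr rfl fun a _ => by rw [gsym hgsym hx a j]

theorem D6inner (hgsym : ∀ x ∈ U, (g x)ᵀ = g x) (hginv : ∀ x ∈ U, IsUnit (g x).det)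
    (hx : x ∈ U) (j i : Fin 4) :
    ∑ a, ∑ r, Cc g Ω x a r i * Cc g Ω x r j a
      = 6 * Pv Ω x i * Pv Ω x j - 2 * g x j i * ∑ ρ, Pv Ω x ρ * Tv g Ω x ρ := by
  have hprod : ∀ a r : Fin 4, Cc g Ω x a r i * Cc g Ω x r j a
      = (if a = r then Pv Ω x i else 0) * (if r = j then Pv Ω x a else 0)
        + (if a = r then Pv Ω x i else 0) * (if r = a then Pv Ω x j else 0)
        - (if a = r then Pv Ω x i else 0) * (g x j a * Tv g Ω x r)
        + (if a = i then Pv Ω x r else 0) * (if r = j then Pv Ω x a else 0)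
        + (if a = i then Pv Ω x r else 0) * (if r = a then Pv Ω x j else 0)
        - (if a = i then Pv Ω x r else 0) * (g x j a * Tv g Ω x r)
        - (g x r i * Tv g Ω x a) * (if r = j then Pv Ω x a else 0)
        - (g x r i * Tv g Ω x a) * (if r = a then Pv Ω x j else 0)
        + (g x r i * Tv g Ω x a) * (g x j a * Tv g Ω x r) := by
    intro a r
    unfold Cc
    ring
  simp only [hprod, Finset.sum_add_distrib, Finset.sum_sub_distrib]
  have e1 : ∑ a, ∑ r, (if a = r then Pv Ω x i else 0) * (if r = j then Pv Ω x a else 0)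
      = Pv Ω x i * Pv Ω x j := by
    have h : ∀ a : Fin 4, ∑ r, (if a = r then Pv Ω x i else 0) * (if r = j then Pv Ω x a else 0)
        = if a = j then Pv Ω x i * Pv Ω x a else 0 := by
      intro a
      rw [Finset.sum_eq_single a]
      · by_cases h' : a = j <;> simp [h']
      · intro b _ hb; simp [Ne.symm hb]
      · simp
    simp only [h]
    simp
  have e2 : ∑ a : Fin 4, ∑ r, (if a = r then Pv Ω x i else 0) * (if r = a then Pv Ω x j else 0)
      = 4 * (Pv Ω x i * Pv Ω x j) := by
    have h : ∀ a : Fin 4, ∑ r, (if a = r then Pv Ω x i else 0) * (if r = a then Pv Ω x j else 0)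
        = Pv Ω x i * Pv Ω x j := by
      intro a
      rw [Finset.sum_eq_single a]
      · simp
      · intro b _ hb; simp [Ne.symm hb]
      · simp
    simp only [h]
    simp
  have e3 : ∑ a, ∑ r, (if a = r then Pv Ω x i else 0) * (g x j a * Tv g Ω x r)
      = Pv Ω x i * Pv Ω x j := by
    have h : ∀ a : Fin 4, ∑ r, (if a = r then Pv Ω x i else 0) * (g x j a * Tv g Ω x r)
        = Pv Ω x i * (g x j a * Tv g Ω x a) := by
      intro a
      rw [Finset.sum_eq_single a]
      · simp
      · intro b _ hb; simp [Ne.symm hb]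
      · simp
    simp only [h]
    rw [← Finset.mul_sum, ← trace_GT (Ω := Ω) hgsym hginv hx j, Finset.mul_sum]
  have e4 : ∑ a, ∑ r, (if a = i then Pv Ω x r else 0) * (if r = j then Pv Ω x a else 0)
      = Pv Ω x j * Pv Ω x i := by
    rw [Finset.sum_eq_single i]
    · rw [Finset.sum_eq_single j]
      · simp
      · intro b _ hb; simp [hb]
      · simp
    · intro b _ hb
      have : ∀ r, (if b = i then Pv Ω x r else 0) * (if r = j then Pv Ω x b else 0) = 0 := by
        intro r; simp [hb]
      simp [this]
    · simp
  have e5 : ∑ a, ∑ r, (if a = i then Pv Ω x r else 0) * (if r = a then Pv Ω x j else 0)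
      = Pv Ω x i * Pv Ω x j := by
    rw [Finset.sum_eq_single i]
    · rw [Finset.sum_eq_single i]
      · simp
      · intro b _ hb; simp [hb]
      · simp
    · intro b _ hb
      have : ∀ r, (if b = i then Pv Ω x r else 0) * (if r = b then Pv Ω x j else 0) = 0 := by
        intro r; simp [hb]
      simp [this]
    · simp
  have e6 : ∑ a, ∑ r, (if a = i then Pv Ω x r else 0) * (g x j a * Tv g Ω x r)
      = g x j i * ∑ ρ, Pv Ω x ρ * Tv g Ω x ρ := by
    rw [Finset.sum_eq_single i]
    · rw [Finset.mul_sum]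
      refine Finset.sum_congr rfl fun r _ => ?_
      simp
      ring
    · intro b _ hb
      have : ∀ r, (if b = i then Pv Ω x r else 0) * (g x j b * Tv g Ω x r) = 0 := by
        intro r; simp [hb]
      simp [this]
    · simp
  have e7 : ∑ a, ∑ r, (g x r i * Tv g Ω x a) * (if r = j then Pv Ω x a else 0)
      = g x j i * ∑ ρ, Pv Ω x ρ * Tv g Ω x ρ := by
    have h : ∀ a : Fin 4, ∑ r, (g x r i * Tv g Ω x a) * (if r = j then Pv Ω x a else 0)
        = g x j i * (Pv Ω x a * Tv g Ω x a) := by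
      intro a
      rw [Finset.sum_eq_single j]
      · simp; ring
      · intro b _ hb; simp [hb]
      · simp
    simp only [h]
    rw [← Finset.mul_sum]
  have e8 : ∑ a, ∑ r, (g x r i * Tv g Ω x a) * (if r = a then Pv Ω x j else 0)
      = Pv Ω x i * Pv Ω x j := by
    have h : ∀ a : Fin 4, ∑ r, (g x r i * Tv g Ω x a) * (if r = a then Pv Ω x j else 0)
        = (g x a i * Tv g Ω x a) * Pv Ω x j := by
      intro a
      rw [Finset.sum_eq_single a]
      · simp
      · intro b _ hb; simp [hb]
      · simp
    simp only [h]
    rw [← Finset.sum_mul, trace_GT' hgsym hginv hx i]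
  have e9 : ∑ a, ∑ r, (g x r i * Tv g Ω x a) * (g x j a * Tv g Ω x r)
      = Pv Ω x j * Pv Ω x i := by
    have h : ∀ a : Fin 4, ∑ r, (g x r i * Tv g Ω x a) * (g x j a * Tv g Ω x r)
        = (g x j a * Tv g Ω x a) * ∑ r, g x r i * Tv g Ω x r := by
      intro a
      rw [Finset.mul_sum]
      exact Finset.sum_congr rfl fun r _ => by ring
    simp only [h]
    rw [← Finset.sum_mul, trace_GT (Ω := Ω) hgsym hginv hx j, trace_GT' hgsym hginv hx i]
  rw [e1, e2, e3, e4, e5, e6, e7, e8, e9]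
  ring

theorem D6 (hgsym : ∀ x ∈ U, (g x)ᵀ = g x) (hginv : ∀ x ∈ U, IsUnit (g x).det)
    (hx : x ∈ U) :
    ∑ j, ∑ i, (g x)⁻¹ j i * ∑ a, ∑ r, Cc g Ω x a r i * Cc g Ω x r j a
      = -2 * ∑ ρ, Pv Ω x ρ * Tv g Ω x ρ := by
  simp only [D6inner hgsym hginv hx]
  have h1 : ∀ j i : Fin 4, (g x)⁻¹ j i *
      (6 * Pv Ω x i * Pv Ω x j - 2 * g x j i * ∑ ρ, Pv Ω x ρ * Tv g Ω x ρ)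
      = 6 * (Pv Ω x j * ((g x)⁻¹ j i * Pv Ω x i))
        - 2 * (((g x)⁻¹ j i * g x j i) * ∑ ρ, Pv Ω x ρ * Tv g Ω x ρ) := by
    intro j i
    ring
  simp only [h1, Finset.sum_sub_distrib]
  have h2 : ∑ j, ∑ i, 6 * (Pv Ω x j * ((g x)⁻¹ j i * Pv Ω x i))
      = 6 * ∑ j, Pv Ω x j * Tv g Ω x j := by
    rw [Finset.mul_sum]
    refine Finset.sum_congr rfl fun j _ => ?_
    unfold Tv
    rw [Finset.mul_sum, Finset.mul_sum]
  have h3 : ∑ j, ∑ i, 2 * (((g x)⁻¹ j i * g x j i) * ∑ ρ, Pv Ω x ρ * Tv g Ω x ρ)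
      = 8 * ∑ ρ, Pv Ω x ρ * Tv g Ω x ρ := by
    have h4 : ∑ j, ∑ i, 2 * (((g x)⁻¹ j i * g x j i) * ∑ ρ, Pv Ω x ρ * Tv g Ω x ρ)
        = 2 * ((∑ j, ∑ i, (g x)⁻¹ j i * g x j i) * ∑ ρ, Pv Ω x ρ * Tv g Ω x ρ) := by
      have k : ∑ j, ∑ i, ((g x)⁻¹ j i * g x j i) * (2 * ∑ ρ, Pv Ω x ρ * Tv g Ω x ρ)
          = (∑ j, ∑ i, (g x)⁻¹ j i * g x j i) * (2 * ∑ ρ, Pv Ω x ρ * Tv g Ω x ρ) := by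
        rw [Finset.sum_mul]
        exact Finset.sum_congr rfl fun j _ => by rw [Finset.sum_mul]
      calc ∑ j, ∑ i, 2 * (((g x)⁻¹ j i * g x j i) * ∑ ρ, Pv Ω x ρ * Tv g Ω x ρ)
          = ∑ j, ∑ i, ((g x)⁻¹ j i * g x j i) * (2 * ∑ ρ, Pv Ω x ρ * Tv g Ω x ρ) :=
            Finset.sum_congr rfl fun j _ => Finset.sum_congr rfl fun i _ => by ring
        _ = (∑ j, ∑ i, (g x)⁻¹ j i * g x j i) * (2 * ∑ ρ, Pv Ω x ρ * Tv g Ω x ρ) := k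
        _ = 2 * ((∑ j, ∑ i, (g x)⁻¹ j i * g x j i) * ∑ ρ, Pv Ω x ρ * Tv g Ω x ρ) := by ring
    rw [h4, tr_GiGm hgsym hginv hx]
    ring
  rw [h2, h3]
  ring

theorem ricci_conf (hU : IsOpen U)
    (hg : ∀ μ ν : Fin 4, ContDiffOn ℝ (⊤ : ℕ∞) (fun x => g x μ ν) U)
    (hgsym : ∀ x ∈ U, (g x)ᵀ = g x) (hginv : ∀ x ∈ U, IsUnit (g x).det)
    (hΩ : ContDiffOn ℝ (⊤ : ℕ∞) Ω U) (hΩpos : ∀ x ∈ U, 0 < Ω x) (hx : x ∈ U)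
    (j i : Fin 4) :
    ricci (fun y => Ω y ^ 2 • g y) x j i
      = ricci g x j i
        + ((∑ a, pd a (fun y => Cc g Ω y a j i) x) - ∑ a, pd i (fun y => Cc g Ω y a j a) x)
        + ∑ a, ∑ r, (levi g x a r a * Cc g Ω x r j i + Cc g Ω x a r a * levi g x r j i
            + Cc g Ω x a r a * Cc g Ω x r j i
            - (levi g x a r i * Cc g Ω x r j a + Cc g Ω x a r i * levi g x r j a
            + Cc g Ω x a r i * Cc g Ω x r j a)) := by
  unfold ricci
  simp only [riem_conf hU hg hgsym hginv hΩ hΩpos hx]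
  rw [Finset.sum_add_distrib, Finset.sum_add_distrib, Finset.sum_sub_distrib]

end Main
end CfAux

open CfAux in
theorem scalar_curvature_conformal_transformation'
    (U : Set (Fin 4 → ℝ)) (hU : IsOpen U)
    (g : (Fin 4 → ℝ) → Matrix (Fin 4) (Fin 4) ℝ)
    (hg : ∀ μ ν : Fin 4, ContDiffOn ℝ (⊤ : ℕ∞) (fun x => g x μ ν) U)
    (hgsym : ∀ x ∈ U, (g x)ᵀ = g x)
    (hginv : ∀ x ∈ U, IsUnit (g x).det)
    (Ω : (Fin 4 → ℝ) → ℝ)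
    (hΩ : ContDiffOn ℝ (⊤ : ℕ∞) Ω U)
    (hΩpos : ∀ x ∈ U, 0 < Ω x) :
    ∀ x ∈ U,
      scal (fun y => (Ω y) ^ 2 • g y) x
        = ((Ω x) ^ 2)⁻¹ *
            (scal g x
              - 6 * ∑ μ, ∑ ν, (g x)⁻¹ μ ν *
                  pd μ (fun y => Real.log (Ω y)) x * pd ν (fun y => Real.log (Ω y)) x
              - 6 * ∑ μ, ∑ ν, (g x)⁻¹ μ ν *
                  (pd μ (pd ν (fun y => Real.log (Ω y))) x
                    - ∑ ρ, levi g x ρ μ ν * pd ρ (fun y => Real.log (Ω y)) x)) := by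
  intro x hx
  unfold scal
  have hinv' : ∀ j i : Fin 4, ((fun y => (Ω y) ^ 2 • g y) x)⁻¹ j i
      = (Ω x ^ 2)⁻¹ * (g x)⁻¹ j i := by
    intro j i
    show ((Ω x ^ 2 • g x))⁻¹ j i = _
    rw [gp_inv hginv hΩpos hx]
    simp [Matrix.smul_apply]
  simp only [hinv', ricci_conf hU hg hgsym hginv hΩ hΩpos hx]
  -- split everything
  have hterm : ∀ j i : Fin 4, (Ω x ^ 2)⁻¹ * (g x)⁻¹ j i *
      (ricci g x j i
        + ((∑ a, pd a (fun y => Cc g Ω y a j i) x) - ∑ a, pd i (fun y => Cc g Ω y a j a) x)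
        + ∑ a, ∑ r, (levi g x a r a * Cc g Ω x r j i + Cc g Ω x a r a * levi g x r j i
            + Cc g Ω x a r a * Cc g Ω x r j i
            - (levi g x a r i * Cc g Ω x r j a + Cc g Ω x a r i * levi g x r j a
            + Cc g Ω x a r i * Cc g Ω x r j a)))
      = (Ω x ^ 2)⁻¹ *
          ((g x)⁻¹ j i * ricci g x j i
            + ((g x)⁻¹ j i * ∑ a, pd a (fun y => Cc g Ω y a j i) x
              - (g x)⁻¹ j i * ∑ a, pd i (fun y => Cc g Ω y a j a) x)
            + ((g x)⁻¹ j i * ∑ a, ∑ r, levi g x a r a * Cc g Ω x r j i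
              + (g x)⁻¹ j i * ∑ a, ∑ r, Cc g Ω x a r a * levi g x r j i
              + (g x)⁻¹ j i * ∑ a, ∑ r, Cc g Ω x a r a * Cc g Ω x r j i
              - ((g x)⁻¹ j i * ∑ a, ∑ r, levi g x a r i * Cc g Ω x r j a
                + (g x)⁻¹ j i * ∑ a, ∑ r, Cc g Ω x a r i * levi g x r j a
                + (g x)⁻¹ j i * ∑ a, ∑ r, Cc g Ω x a r i * Cc g Ω x r j a))) := by
    intro j i
    have hsplit : ∑ a, ∑ r, (levi g x a r a * Cc g Ω x r j i + Cc g Ω x a r a * levi g x r j i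
            + Cc g Ω x a r a * Cc g Ω x r j i
            - (levi g x a r i * Cc g Ω x r j a + Cc g Ω x a r i * levi g x r j a
            + Cc g Ω x a r i * Cc g Ω x r j a))
        = (∑ a, ∑ r, levi g x a r a * Cc g Ω x r j i)
          + (∑ a, ∑ r, Cc g Ω x a r a * levi g x r j i)
          + (∑ a, ∑ r, Cc g Ω x a r a * Cc g Ω x r j i)
          - ((∑ a, ∑ r, levi g x a r i * Cc g Ω x r j a)
            + (∑ a, ∑ r, Cc g Ω x a r i * levi g x r j a)
            + ∑ a, ∑ r, Cc g Ω x a r i * Cc g Ω x r j a) := by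
      simp only [Finset.sum_add_distrib, Finset.sum_sub_distrib]
    rw [hsplit]
    ring
  simp only [hterm]
  simp only [← Finset.mul_sum]
  congr 1
  simp only [Finset.sum_add_distrib, Finset.sum_sub_distrib]
  have S0 : ∑ j, ∑ i, (g x)⁻¹ j i * ricci g x j i = scal g x := rfl
  rw [S0, PA hU hg hgsym hginv hΩ hΩpos hx, PB hU hg hgsym hginv hΩ hΩpos hx,
    D1 hU hg hgsym hginv hx, D2 hU hg hgsym hginv hx, D3 hU hg hgsym hginv hx,
    D4 hU hg hgsym hginv hx, D5 hU hg hgsym hginv hx, D6 hgsym hginv hx]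
  -- right-hand side conversions
  have R1 : ∑ μ, ∑ ν, (g x)⁻¹ μ ν * pd μ (fun y => Real.log (Ω y)) x
        * pd ν (fun y => Real.log (Ω y)) x
      = ∑ ρ, Pv Ω x ρ * Tv g Ω x ρ := by
    simp only [Tv, Pv]
    refine Finset.sum_congr rfl fun μ _ => ?_
    rw [Finset.mul_sum]
    exact Finset.sum_congr rfl fun ν _ => by ring
  have R2 : ∑ μ, ∑ ν, (g x)⁻¹ μ ν *
        (pd μ (pd ν (fun y => Real.log (Ω y))) x
          - ∑ ρ, levi g x ρ μ ν * pd ρ (fun y => Real.log (Ω y)) x)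
      = (∑ μ, ∑ ν, (g x)⁻¹ μ ν * pd μ (fun y => Pv Ω y ν) x)
        - ∑ ρ, Pv Ω x ρ * Qv g x ρ := by
    have hsplit : ∀ μ ν : Fin 4, (g x)⁻¹ μ ν *
        (pd μ (pd ν (fun y => Real.log (Ω y))) x
          - ∑ ρ, levi g x ρ μ ν * pd ρ (fun y => Real.log (Ω y)) x)
        = (g x)⁻¹ μ ν * pd μ (fun y => Pv Ω y ν) x
          - ∑ ρ, (g x)⁻¹ μ ν * (levi g x ρ μ ν * Pv Ω x ρ) := by
      intro μ ν
      rw [mul_sub, ← Finset.mul_sum]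
      rfl
    simp only [hsplit, Finset.sum_sub_distrib]
    congr 1
    rw [sum_comm3 (fun μ ν ρ => (g x)⁻¹ μ ν * (levi g x ρ μ ν * Pv Ω x ρ))]
    refine Finset.sum_congr rfl fun ρ _ => ?_
    unfold Qv
    rw [Finset.mul_sum]
    refine Finset.sum_congr rfl fun μ _ => ?_
    rw [Finset.mul_sum]
    exact Finset.sum_congr rfl fun ν _ => by ring
  rw [R1, R2]
  have hPQ : ∑ ρ, Pv Ω x ρ * Qv g x ρ
      = (∑ ρ, Yv g x ρ * Tv g Ω x ρ) - (1 / 2) * ∑ ρ, (1:ℝ) * (Xv g x ρ * Tv g Ω x ρ) := by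
    rw [PQ_eq hU hg hgsym hginv hx, Finset.mul_sum, ← Finset.sum_sub_distrib]
    exact Finset.sum_congr rfl fun ρ _ => by ring
  have hXT : ∑ ρ, (1 / 2 : ℝ) * Xv g x ρ * Tv g Ω x ρ
      = (1 / 2) * ∑ ρ, (1:ℝ) * (Xv g x ρ * Tv g Ω x ρ) := by
    rw [Finset.mul_sum]
    exact Finset.sum_congr rfl fun ρ _ => by ring
  have hXT2 : ∑ ρ, Xv g x ρ * Tv g Ω x ρ = ∑ ρ, (1:ℝ) * (Xv g x ρ * Tv g Ω x ρ) :=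
    Finset.sum_congr rfl fun ρ _ => by ring
  rw [hPQ, hXT2]
  ring

/-- conformal transformation of the scalar curvature in dimension 4:
for `g'_{αβ} = Ω² g_{αβ}`,
`R' = Ω⁻² (R − 6 g^{μν} ∂_μ(ln Ω) ∂_ν(ln Ω) − 6 ∇²(ln Ω))`, where
`∇²(ln Ω) = g^{μν}(∂_μ∂_ν(ln Ω) − Λ^ρ_{μν} ∂_ρ(ln Ω))`. -/
theorem scalar_curvature_conformal_transformation
    (U : Set (Fin 4 → ℝ)) (hU : IsOpen U)
    (g : (Fin 4 → ℝ) → Matrix (Fin 4) (Fin 4) ℝ)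
    (hg : ∀ μ ν : Fin 4, ContDiffOn ℝ (⊤ : ℕ∞) (fun x => g x μ ν) U)
    (hgsym : ∀ x ∈ U, (g x)ᵀ = g x)
    (hginv : ∀ x ∈ U, IsUnit (g x).det)
    (Ω : (Fin 4 → ℝ) → ℝ)
    (hΩ : ContDiffOn ℝ (⊤ : ℕ∞) Ω U)
    (hΩpos : ∀ x ∈ U, 0 < Ω x) :
    ∀ x ∈ U,
      scal (fun y => (Ω y) ^ 2 • g y) x
        = ((Ω x) ^ 2)⁻¹ *
            (scal g x
              - 6 * ∑ μ, ∑ ν, (g x)⁻¹ μ ν *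
                  pd μ (fun y => Real.log (Ω y)) x * pd ν (fun y => Real.log (Ω y)) x
              - 6 * ∑ μ, ∑ ν, (g x)⁻¹ μ ν *
                  (pd μ (pd ν (fun y => Real.log (Ω y))) x
                    - ∑ ρ, levi g x ρ μ ν * pd ρ (fun y => Real.log (Ω y)) x)) := by
  exact scalar_curvature_conformal_transformation' U hU g hg hgsym hginv Ω hΩ hΩpos
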